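/- Let r ≥ ℓ−1 ≥ 1 and let k_1, …, k_r be positive integers. The extremal number ex(K_{k_1, …, k_r}, K_ℓ) — the maximum number of edges of a K_ℓ-free subgraph of the complete multipartite graph K_{k_1, …, k_r} — is equal to the maximum, over all partitions 𝒫 of the index set [r] into ℓ−1 (possibly empty) sets, of Σ_{P ≠ P' ∈ 𝒫} k_P · k_{P'}, where k_P := Σ_{i ∈ P} k_i and the sum is over unordered pairs of distinct parts of 𝒫. -/

import Mathlib

open Finset

section Helpers

lemma aux_sum_pi_two {r : ℕ} (k : Fin r → ℕ) {i j : Fin r} (hij : j ≠ i)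
    (F : Fin (k i) → Fin (k j) → ℕ) :
    (∑ σ : (∀ m, Fin (k m)), F (σ i) (σ j)) * (k i * k j)
      = (Fintype.card (∀ m, Fin (k m))) * ∑ a, ∑ b, F a b := by
  classical
  set e1 := Equiv.piSplitAt i (fun m => Fin (k m)) with he1
  set j' : {m : Fin r // m ≠ i} := ⟨j, hij⟩ with hj'
  set e2 := Equiv.piSplitAt j' (fun m : {m : Fin r // m ≠ i} => Fin (k m.1)) with he2
  have h1 : (∑ σ : (∀ m, Fin (k m)), F (σ i) (σ j))
      = ∑ p : Fin (k i) × (∀ m : {m : Fin r // m ≠ i}, Fin (k m.1)),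
          F p.1 (p.2 j') := by
    rw [← Equiv.sum_comp e1.symm (fun σ => F (σ i) (σ j))]
    apply Finset.sum_congr rfl
    intro p _
    congr 1
    · simp [he1, Equiv.piSplitAt_symm_apply]
    · simp [he1, Equiv.piSplitAt_symm_apply, hij]; rfl
  have h2 : ∀ a : Fin (k i), (∑ τ : (∀ m : {m : Fin r // m ≠ i}, Fin (k m.1)), F a (τ j'))
      = ∑ q : Fin (k j) × (∀ m : {m : {m : Fin r // m ≠ i} // m ≠ j'}, Fin (k m.1.1)),
          F a q.1 := by
    intro a
    rw [← Equiv.sum_comp e2.symm (fun τ => F a (τ j'))]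
    apply Finset.sum_congr rfl
    intro q _
    congr 1
    simp [he2, Equiv.piSplitAt_symm_apply]
  have hN : Fintype.card (∀ m, Fin (k m))
      = k i * (k j * Fintype.card (∀ m : {m : {m : Fin r // m ≠ i} // m ≠ j'}, Fin (k m.1.1))) := by
    rw [Fintype.card_congr e1, Fintype.card_prod, Fintype.card_fin,
      Fintype.card_congr e2, Fintype.card_prod, Fintype.card_fin]
  rw [h1]
  rw [Fintype.sum_prod_type]
  simp only [h2]
  simp only [Fintype.sum_prod_type]
  simp only [Finset.sum_const, Finset.card_univ, smul_eq_mul]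
  rw [hN]
  simp only [← Finset.mul_sum]
  ring

lemma aux_weighted_turan {V : Type} [Fintype V] [DecidableEq V] [Nonempty V] :
    ∀ m : ℕ, 1 ≤ m → ∀ (w : V → ℕ) (R : SimpleGraph V) [DecidableRel R.Adj],
      R.CliqueFree (m + 1) →
      ∃ c : V → Fin m,
        (∑ i, ∑ j, if R.Adj i j then w i * w j else 0)
          ≤ ∑ i, ∑ j, if c i ≠ c j then w i * w j else 0 := by
  intro m hm
  induction m, hm using Nat.le_induction with
  | base =>
    intro w R _ hfree
    refine ⟨fun _ => 0, ?_⟩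
    rw [SimpleGraph.cliqueFree_two] at hfree
    subst hfree
    simp
  | succ m hm IH =>
    intro w R _ hfree
    set d : V → ℕ := fun i => ∑ j, if R.Adj i j then w j else 0 with hd
    obtain ⟨v, -, hv⟩ := Finset.exists_max_image univ d univ_nonempty
    set RA : SimpleGraph V :=
      { Adj := fun a b => R.Adj a b ∧ R.Adj v a ∧ R.Adj v b
        symm := by
          refine ⟨fun a b ⟨h1, h2, h3⟩ => ?_⟩
          exact ⟨h1.symm, h3, h2⟩
        loopless := by
          refine ⟨fun a ⟨h1, _, _⟩ => ?_⟩
          exact R.loopless.irrefl a h1 } with hRA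
    haveI : DecidableRel RA.Adj := fun a b =>
      inferInstanceAs (Decidable (R.Adj a b ∧ R.Adj v a ∧ R.Adj v b))
    have hAfree : RA.CliqueFree (m + 1) := by
      intro s hs
      have hcard : 1 < s.card := by
        rw [hs.2]; omega
      have hadj : ∀ a ∈ s, R.Adj v a := by
        intro a ha
        obtain ⟨b, hb, hba⟩ := Finset.exists_mem_ne hcard a
        have := hs.1 ha hb (fun h => hba (h ▸ rfl))
        exact this.2.1
      have hvs : v ∉ s := fun hvin => R.loopless.irrefl v (hadj v hvin)
      have : R.IsNClique (m + 2) (insert v s) := by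
        refine SimpleGraph.IsNClique.insert ⟨?_, hs.2⟩ hadj
        intro a ha b hb hab
        exact (hs.1 ha hb hab).1
      exact hfree _ this
    set w' : V → ℕ := fun i => if R.Adj v i then w i else 0 with hw'
    obtain ⟨c', hc'⟩ := IH w' RA hAfree
    refine ⟨fun i => if R.Adj v i then (c' i).castSucc else Fin.last m, ?_⟩
    set c : V → Fin (m+1) := fun i => if R.Adj v i then (c' i).castSucc else Fin.last m with hc
    set SB : ℕ := ∑ i, if ¬ R.Adj v i then w i else 0 with hSB
    have hdv : d v = ∑ i, if R.Adj v i then w i else 0 := rfl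
    have step1 : (∑ i, ∑ j, if R.Adj i j then w i * w j else 0)
        ≤ (∑ i, ∑ j, if RA.Adj i j then w' i * w' j else 0)
          + ((∑ i, ∑ j, if ¬ R.Adj v i then (if R.Adj i j then w i * w j else 0) else 0)
            + (∑ i, ∑ j, if ¬ R.Adj v j then (if R.Adj i j then w i * w j else 0) else 0)) := by
      rw [← Finset.sum_add_distrib, ← Finset.sum_add_distrib]
      apply Finset.sum_le_sum
      intro i _
      rw [← Finset.sum_add_distrib, ← Finset.sum_add_distrib]
      apply Finset.sum_le_sum
      intro j _
      by_cases hvi : R.Adj v i <;> by_cases hvj : R.Adj v j <;>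
        by_cases hij : R.Adj i j <;>
        simp [hRA, hw', hvi, hvj, hij]
    have step2 : (∑ i, ∑ j, if ¬ R.Adj v j then (if R.Adj i j then w i * w j else 0) else 0)
        = (∑ i, ∑ j, if ¬ R.Adj v i then (if R.Adj i j then w i * w j else 0) else 0) := by
      rw [Finset.sum_comm]
      apply Finset.sum_congr rfl; intro i _
      apply Finset.sum_congr rfl; intro j _
      have hsymm : R.Adj j i ↔ R.Adj i j := ⟨fun h => h.symm, fun h => h.symm⟩
      by_cases hij : R.Adj i j <;> simp [hsymm, hij, mul_comm]
    have step3 : (∑ i, ∑ j, if ¬ R.Adj v i then (if R.Adj i j then w i * w j else 0) else 0)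
        ≤ SB * d v := by
      rw [hSB, Finset.sum_mul]
      apply Finset.sum_le_sum
      intro i _
      by_cases hvi : R.Adj v i
      · simp [hvi]
      · simp only [hvi, not_false_iff, if_true, if_neg]
        have : (∑ j, if R.Adj i j then w i * w j else 0) = w i * d i := by
          rw [hd, Finset.mul_sum]
          apply Finset.sum_congr rfl; intro j _
          by_cases hij : R.Adj i j <;> simp [hij]
        rw [this]
        exact Nat.mul_le_mul_left _ (hv i (mem_univ i))
    have step6 : (∑ i, ∑ j, if c' i ≠ c' j then w' i * w' j else 0)
          + ((∑ i, ∑ j, if R.Adj v i ∧ ¬ R.Adj v j then w i * w j else 0)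
            + (∑ i, ∑ j, if ¬ R.Adj v i ∧ R.Adj v j then w i * w j else 0))
        ≤ ∑ i, ∑ j, if c i ≠ c j then w i * w j else 0 := by
      rw [← Finset.sum_add_distrib, ← Finset.sum_add_distrib]
      apply Finset.sum_le_sum
      intro i _
      rw [← Finset.sum_add_distrib, ← Finset.sum_add_distrib]
      apply Finset.sum_le_sum
      intro j _
      by_cases hvi : R.Adj v i <;> by_cases hvj : R.Adj v j
      · by_cases hcc : c' i = c' j <;>
          simp [hc, hw', hvi, hvj, hcc, Fin.castSucc_inj]
      · simp [hc, hw', hvi, hvj, (Fin.castSucc_lt_last (c' i)).ne]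
      · simp [hc, hw', hvi, hvj, (Fin.castSucc_lt_last (c' j)).ne']
      · simp [hc, hw', hvi, hvj]
    have step7 : (∑ i, ∑ j, if R.Adj v i ∧ ¬ R.Adj v j then w i * w j else 0)
        = d v * SB := by
      rw [hdv, hSB, Finset.sum_mul_sum]
      apply Finset.sum_congr rfl; intro i _
      apply Finset.sum_congr rfl; intro j _
      by_cases hvi : R.Adj v i <;> by_cases hvj : R.Adj v j <;> simp [hvi, hvj]
    have step8 : (∑ i, ∑ j, if ¬ R.Adj v i ∧ R.Adj v j then w i * w j else 0)
        = SB * d v := by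
      rw [hdv, hSB, Finset.sum_mul_sum]
      apply Finset.sum_congr rfl; intro i _
      apply Finset.sum_congr rfl; intro j _
      by_cases hvi : R.Adj v i <;> by_cases hvj : R.Adj v j <;> simp [hvi, hvj]
    calc (∑ i, ∑ j, if R.Adj i j then w i * w j else 0)
        ≤ (∑ i, ∑ j, if RA.Adj i j then w' i * w' j else 0)
          + ((∑ i, ∑ j, if ¬ R.Adj v i then (if R.Adj i j then w i * w j else 0) else 0)
            + (∑ i, ∑ j, if ¬ R.Adj v j then (if R.Adj i j then w i * w j else 0) else 0)) := step1
      _ ≤ (∑ i, ∑ j, if c' i ≠ c' j then w' i * w' j else 0)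
          + ((∑ i, ∑ j, if R.Adj v i ∧ ¬ R.Adj v j then w i * w j else 0)
            + (∑ i, ∑ j, if ¬ R.Adj v i ∧ R.Adj v j then w i * w j else 0)) := by
          rw [step2, step7, step8]
          exact Nat.add_le_add hc' (Nat.add_le_add (by rw [Nat.mul_comm]; exact step3) step3)
      _ ≤ _ := step6

lemma aux_sum_ne_eq_two_mul_lt {n : ℕ} (x : Fin n → ℕ) :
    (∑ P, ∑ Q, if P ≠ Q then x P * x Q else 0)
      = 2 * ∑ P, ∑ Q, if P < Q then x P * x Q else 0 := by
  have h : ∀ P Q : Fin n, (if P ≠ Q then x P * x Q else 0)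
      = (if P < Q then x P * x Q else 0) + (if Q < P then x P * x Q else 0) := by
    intro P Q
    rcases lt_trichotomy P Q with h|h|h
    · simp [h, h.ne, asymm h]
    · simp [h]
    · simp [h, h.ne', asymm h]
  simp only [h, Finset.sum_add_distrib]
  have h2 : (∑ P, ∑ Q, if Q < P then x P * x Q else 0)
      = ∑ P, ∑ Q : Fin n, if P < Q then x P * x Q else 0 := by
    rw [Finset.sum_comm]
    apply Finset.sum_congr rfl; intro P _
    apply Finset.sum_congr rfl; intro Q _
    by_cases hpq : P < Q <;> simp [hpq, mul_comm]
  rw [h2]; ring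

lemma aux_sum_fiber {r n : ℕ} (k : Fin r → ℕ) (c : Fin r → Fin n) :
    (∑ i, ∑ j, if c i ≠ c j then k i * k j else 0)
      = ∑ P, ∑ Q, if P ≠ Q then
          (∑ i ∈ Finset.univ.filter (fun i => c i = P), k i) *
          (∑ j ∈ Finset.univ.filter (fun j => c j = Q), k j) else 0 := by
  have h : ∀ P Q : Fin n, (if P ≠ Q then
          (∑ i ∈ Finset.univ.filter (fun i => c i = P), k i) *
          (∑ j ∈ Finset.univ.filter (fun j => c j = Q), k j) else 0)
      = ∑ i ∈ Finset.univ.filter (fun i => c i = P),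
          ∑ j ∈ Finset.univ.filter (fun j => c j = Q),
            if c i ≠ c j then k i * k j else 0 := by
    intro P Q
    by_cases hpq : P = Q
    · subst hpq
      rw [if_neg (by simp)]
      symm
      apply Finset.sum_eq_zero
      intro i hi
      apply Finset.sum_eq_zero
      intro j hj
      simp only [Finset.mem_filter] at hi hj
      rw [if_neg (by simp [hi.2, hj.2])]
    · rw [if_pos hpq, Finset.sum_mul_sum]
      apply Finset.sum_congr rfl; intro i hi
      apply Finset.sum_congr rfl; intro j hj
      simp only [Finset.mem_filter] at hi hj
      rw [if_pos (by rw [hi.2, hj.2]; exact hpq)]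
  simp only [h]
  have h2 : ∀ P : Fin n, (∑ Q : Fin n, ∑ i ∈ Finset.univ.filter (fun i => c i = P),
          ∑ j ∈ Finset.univ.filter (fun j => c j = Q),
            if c i ≠ c j then k i * k j else 0)
      = ∑ i ∈ Finset.univ.filter (fun i => c i = P),
          ∑ j, if c i ≠ c j then k i * k j else 0 := by
    intro P
    rw [Finset.sum_comm]
    apply Finset.sum_congr rfl; intro i _
    rw [Finset.sum_fiberwise]
  simp only [h2]
  rw [Finset.sum_fiberwise]

lemma aux_double_count {V : Type} [Fintype V] [DecidableEq V] (G : SimpleGraph V)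
    [DecidableRel G.Adj] :
    (∑ v, ∑ w, if G.Adj v w then 1 else 0) = 2 * G.edgeFinset.card := by
  rw [← SimpleGraph.sum_degrees_eq_twice_card_edges]
  apply Finset.sum_congr rfl; intro v _
  rw [SimpleGraph.degree, SimpleGraph.neighborFinset_eq_filter]
  simp [Finset.sum_boole]

lemma aux_sigma_expand {r : ℕ} (k : Fin r → ℕ) (f : (Σ i, Fin (k i)) → ℕ) :
    ∑ v, f v = ∑ i, ∑ a, f ⟨i, a⟩ := by
  rw [← Finset.univ_sigma_univ, Finset.sum_sigma]

lemma aux_averaging {r : ℕ} (k : Fin r → ℕ) (G : SimpleGraph (Σ i, Fin (k i)))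
    [DecidableRel G.Adj]
    (hG : G ≤ SimpleGraph.completeMultipartiteGraph (fun i => Fin (k i))) :
    (Fintype.card (∀ m, Fin (k m))) * (∑ v, ∑ w, if G.Adj v w then 1 else 0)
      = ∑ σ : (∀ m, Fin (k m)), ∑ i, ∑ j,
          if G.Adj ⟨i, σ i⟩ ⟨j, σ j⟩ then k i * k j else 0 := by
  have hdiag : ∀ (i : Fin r) (a b : Fin (k i)), ¬ G.Adj ⟨i, a⟩ ⟨i, b⟩ := by
    intro i a b h
    have := hG h
    simp [SimpleGraph.completeMultipartiteGraph] at this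
  rw [aux_sigma_expand k]
  have hin : ∀ i : Fin r, ∑ a : Fin (k i), ∑ w : (Σ i, Fin (k i)), (if G.Adj ⟨i, a⟩ w then 1 else 0)
      = ∑ a : Fin (k i), ∑ j, ∑ b : Fin (k j), (if G.Adj ⟨i, a⟩ ⟨j, b⟩ then 1 else 0) := by
    intro i
    apply Finset.sum_congr rfl; intro a _
    rw [aux_sigma_expand k]
  simp only [hin]
  have hre : ∀ i : Fin r, (∑ a : Fin (k i), ∑ j, ∑ b : Fin (k j), (if G.Adj ⟨i, a⟩ ⟨j, b⟩ then 1 else 0))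
      = ∑ j, ∑ a : Fin (k i), ∑ b : Fin (k j), (if G.Adj ⟨i, a⟩ ⟨j, b⟩ then 1 else 0) := by
    intro i; exact Finset.sum_comm
  simp only [hre]
  rw [Finset.mul_sum]
  rw [Finset.sum_comm]
  apply Finset.sum_congr rfl; intro i _
  rw [Finset.mul_sum, Finset.sum_comm]
  apply Finset.sum_congr rfl; intro j _
  by_cases hij : j = i
  · subst hij
    have h1 : ∀ a b : Fin (k j), (if G.Adj ⟨j, a⟩ ⟨j, b⟩ then (1:ℕ) else 0) = 0 := by
      intro a b; simp [hdiag j a b]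
    simp [h1, hdiag]
  · have key := aux_sum_pi_two k hij (fun a b => if G.Adj ⟨i, a⟩ ⟨j, b⟩ then 1 else 0)
    have h2 : (∑ σ : (∀ m, Fin (k m)), if G.Adj ⟨i, σ i⟩ ⟨j, σ j⟩ then k i * k j else 0)
        = (∑ σ : (∀ m, Fin (k m)), if G.Adj ⟨i, σ i⟩ ⟨j, σ j⟩ then 1 else 0) * (k i * k j) := by
      rw [Finset.sum_mul]
      apply Finset.sum_congr rfl; intro σ _
      by_cases h : G.Adj ⟨i, σ i⟩ ⟨j, σ j⟩ <;> simp [h]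
    rw [h2, key]

end Helpers

/-- For `r ≥ ℓ - 1 ≥ 1` and positive part sizes `k_1, …, k_r`, the extremal
number `ex(K_{k_1,…,k_r}, K_ℓ)` — the maximum number of edges of a `K_ℓ`-free subgraph of the
complete multipartite graph `K_{k_1,…,k_r}` — equals the maximum, over all partitions of the
index set `[r]` into `ℓ - 1` (possibly empty) sets (encoded as colorings `c : Fin r → Fin (ℓ-1)`),
of `∑_{P < P'} k_P · k_{P'}`, the sum over unordered pairs of distinct parts. -/
theorem multipartite_turan (r ℓ : ℕ) (hℓ : 2 ≤ ℓ) (hrℓ : ℓ - 1 ≤ r)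
    (k : Fin r → ℕ) (hk : ∀ i, 1 ≤ k i) :
    ∃ M : ℕ,
      IsGreatest {m : ℕ | ∃ G : SimpleGraph (Σ i, Fin (k i)),
        G ≤ SimpleGraph.completeMultipartiteGraph (fun i => Fin (k i)) ∧ G.CliqueFree ℓ ∧
        m = G.edgeSet.ncard} M ∧
      IsGreatest {m : ℕ | ∃ c : Fin r → Fin (ℓ - 1),
        m = ∑ P : Fin (ℓ - 1), ∑ Q : Fin (ℓ - 1), if P < Q then
              (∑ i ∈ Finset.univ.filter (fun i => c i = P), k i) *
              (∑ i ∈ Finset.univ.filter (fun i => c i = Q), k i) else 0} M := by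
  classical
  have hl1 : ℓ - 1 + 1 = ℓ := by omega
  have hl2 : 1 ≤ ℓ - 1 := by omega
  haveI : Nonempty (Fin (ℓ - 1)) := ⟨⟨0, by omega⟩⟩
  haveI : Nonempty (Fin r) := ⟨⟨0, by omega⟩⟩
  set S : (Fin r → Fin (ℓ - 1)) → ℕ := fun c =>
    ∑ P : Fin (ℓ - 1), ∑ Q : Fin (ℓ - 1), if P < Q then
      (∑ i ∈ Finset.univ.filter (fun i => c i = P), k i) *
      (∑ i ∈ Finset.univ.filter (fun i => c i = Q), k i) else 0 with hS
  obtain ⟨c₀, -, hc₀⟩ := Finset.exists_max_image univ S univ_nonempty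
  -- the construction
  set G0 : SimpleGraph (Σ i, Fin (k i)) :=
    { Adj := fun v w => c₀ v.1 ≠ c₀ w.1
      symm := ⟨fun v w h => h.symm⟩
      loopless := ⟨fun v h => h rfl⟩ } with hG0
  haveI : DecidableRel G0.Adj := fun v w =>
    inferInstanceAs (Decidable (c₀ v.1 ≠ c₀ w.1))
  have hle : G0 ≤ SimpleGraph.completeMultipartiteGraph (fun i => Fin (k i)) := by
    intro v w h
    simp only [SimpleGraph.completeMultipartiteGraph, SimpleGraph.comap_adj,
      SimpleGraph.top_adj]
    have h' : c₀ v.1 ≠ c₀ w.1 := h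
    exact fun e => h' (congrArg c₀ e)
  have hfree : G0.CliqueFree ℓ := by
    intro s hs
    have hinj : Set.InjOn (fun v : (Σ i, Fin (k i)) => c₀ v.1) ↑s := by
      intro a ha b hb hab
      by_contra hne
      exact (hs.1 ha hb hne) hab
    have hcard : (s.image fun v => c₀ v.1).card = ℓ := by
      rw [Finset.card_image_of_injOn hinj, hs.2]
    have hle' : (s.image fun v => c₀ v.1).card ≤ ℓ - 1 := by
      have := Finset.card_le_univ (s.image fun v => c₀ v.1)
      simpa using this
    omega
  have hcount : 2 * G0.edgeFinset.card = 2 * S c₀ := by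
    rw [← aux_double_count G0]
    have e1 : (∑ v, ∑ w, if G0.Adj v w then (1:ℕ) else 0)
        = ∑ i, ∑ j, if c₀ i ≠ c₀ j then k i * k j else 0 := by
      rw [aux_sigma_expand k]
      have hx : ∀ (i : Fin r) (a : Fin (k i)),
          (∑ w, if G0.Adj ⟨i,a⟩ w then (1:ℕ) else 0)
            = ∑ j, ∑ _b : Fin (k j), if c₀ i ≠ c₀ j then (1:ℕ) else 0 := by
        intro i a; rw [aux_sigma_expand k]
        apply Finset.sum_congr rfl; intro j _
        apply Finset.sum_congr rfl; intro b _
        exact if_congr Iff.rfl rfl rfl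
      simp only [hx]
      apply Finset.sum_congr rfl; intro i _
      rw [Finset.sum_comm]
      apply Finset.sum_congr rfl; intro j _
      by_cases h : c₀ i ≠ c₀ j <;> simp [h, mul_comm]
    rw [e1, aux_sum_fiber k c₀, aux_sum_ne_eq_two_mul_lt]
  have hedge0 : G0.edgeSet.ncard = S c₀ := by
    rw [Set.ncard_eq_toFinset_card']
    have : G0.edgeSet.toFinset = G0.edgeFinset := rfl
    rw [this]
    omega
  refine ⟨S c₀, ⟨⟨G0, hle, hfree, hedge0.symm⟩, ?_⟩, ⟨⟨c₀, rfl⟩, ?_⟩⟩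
  · -- upper bound for graphs
    rintro m ⟨G, hGle, hGfree, rfl⟩
    letI : DecidableRel G.Adj := Classical.decRel _
    haveI hΩ : Nonempty (∀ m, Fin (k m)) := ⟨fun m => ⟨0, hk m⟩⟩
    have havg := aux_averaging k G hGle
    obtain ⟨σ, -, hσ⟩ := Finset.exists_le_of_sum_le
      (f := fun _ : (∀ m, Fin (k m)) => ∑ v, ∑ w, if G.Adj v w then 1 else 0)
      (g := fun σ : (∀ m, Fin (k m)) => ∑ i, ∑ j,
        if G.Adj ⟨i, σ i⟩ ⟨j, σ j⟩ then k i * k j else 0)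
      univ_nonempty
      (by rw [Finset.sum_const, Finset.card_univ, smul_eq_mul, havg])
    set Rσ : SimpleGraph (Fin r) :=
      { Adj := fun i j => G.Adj ⟨i, σ i⟩ ⟨j, σ j⟩
        symm := ⟨fun i j h => h.symm⟩
        loopless := ⟨fun i h => G.loopless.irrefl _ h⟩ } with hRσ
    letI : DecidableRel Rσ.Adj := fun i j =>
      inferInstanceAs (Decidable (G.Adj ⟨i, σ i⟩ ⟨j, σ j⟩))
    have hRfree : Rσ.CliqueFree ((ℓ - 1) + 1) := by
      rw [hl1]
      intro s hs
      refine hGfree (s.image fun i => (⟨i, σ i⟩ : Σ i, Fin (k i))) ⟨?_, ?_⟩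
      · intro a ha b hb hab
        simp only [Finset.coe_image, Set.mem_image, Finset.mem_coe] at ha hb
        obtain ⟨i, hi, rfl⟩ := ha
        obtain ⟨j, hj, rfl⟩ := hb
        have hij : i ≠ j := fun e => hab (by subst e; rfl)
        exact hs.1 hi hj hij
      · rw [Finset.card_image_of_injOn, hs.2]
        intro a _ b _ hab
        exact congrArg Sigma.fst hab
    obtain ⟨c, hc⟩ := aux_weighted_turan (ℓ - 1) hl2 k Rσ hRfree
    have hA : (∑ v, ∑ w, if G.Adj v w then 1 else 0)
        ≤ ∑ i, ∑ j, if Rσ.Adj i j then k i * k j else 0 := by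
      refine hσ.trans (le_of_eq ?_)
      apply Finset.sum_congr rfl; intro i _
      apply Finset.sum_congr rfl; intro j _
      exact if_congr Iff.rfl rfl rfl
    have h1 : (∑ i, ∑ j, if c i ≠ c j then k i * k j else 0) = 2 * S c := by
      rw [aux_sum_fiber k c, aux_sum_ne_eq_two_mul_lt]
    have h2 : (∑ v, ∑ w, if G.Adj v w then 1 else 0) = 2 * G.edgeFinset.card :=
      aux_double_count G
    have hchain : 2 * G.edgeFinset.card ≤ 2 * S c₀ := by
      rw [← h2]
      exact hA.trans (hc.trans (le_of_eq_of_le h1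
        (Nat.mul_le_mul_left 2 (hc₀ c (Finset.mem_univ c)))))
    have hncard : G.edgeSet.ncard = G.edgeFinset.card := by
      rw [Set.ncard_eq_toFinset_card']; congr 1
    rw [hncard]
    exact Nat.le_of_mul_le_mul_left hchain (by norm_num)
  · -- upper bound for colorings
    rintro m ⟨c, rfl⟩
    exact hc₀ c (Finset.mem_univ c)
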